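/- In the set-cover reduction graph G, any (λ,k)-FT-BFP H of G yields a set cover of the instance (U,𝔉) of size at most (1/λ)·min_j |in(v_j, H)|: choosing j minimizing the in-degree of v_j and defining S_i = {W ∈ 𝔉 : (y_{i,W}, v_j) ∈ E(H)} for i = 1,…,λ, the smallest of the sets S_1,…,S_λ is a valid set cover of U of size at most min_j |in(v_j,H)| / λ. -/

import Mathlib

open Finset

/-- `p` is a nonempty directed path/walk (as a list of edges) from `s` to `t`
using only edges of `G`. -/
def IsPath {V : Type*} (G : Finset (V × V)) (s t : V) (p : List (V × V)) : Prop :=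
  p ≠ [] ∧ (∀ e ∈ p, e ∈ G) ∧ List.Chain' (fun e f => e.2 = f.1) p ∧
    p.head?.map Prod.fst = some s ∧ p.getLast?.map Prod.snd = some t

/-- `G` contains `r` pairwise edge-disjoint paths from `s` to `t` (unit capacities). -/
def EDP {V : Type*} (G : Finset (V × V)) (s t : V) (r : ℕ) : Prop :=
  ∃ ps : Fin r → List (V × V), (∀ i, IsPath G s t (ps i)) ∧
    ∀ i j, i ≠ j → ∀ e, e ∈ ps i → e ∉ ps j

/-- Max-flow with unit capacities: the maximum number of edge-disjoint `s`-`t` paths. -/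
noncomputable def maxFlow {V : Type*} (G : Finset (V × V)) (s t : V) : ℕ :=
  sSup {r | EDP G s t r}

/-- Directed reachability in the edge set `G`. -/
def Reach {V : Type*} (G : Finset (V × V)) (s t : V) : Prop :=
  Relation.ReflTransGen (fun a b => (a, b) ∈ G) s t

def inEdges {V : Type*} [DecidableEq V] (G : Finset (V × V)) (v : V) : Finset (V × V) :=
  G.filter fun e => e.2 = v

def outDeg {V : Type*} [DecidableEq V] (G : Finset (V × V)) (v : V) : ℕ :=
  (G.filter fun e => e.1 = v).card

/-- `H` is a `(lam, k)` fault-tolerant bounded-flow-preserver of `G` w.r.t. source `s`: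
for every set `F` of at most `k` failed edges and every vertex `t`, the `s`-`t` max-flow
of `H \ F` equals that of `G \ F` whenever the latter is at most `lam`, and is at least
`lam` otherwise. -/
def IsFTBFP {V : Type*} [DecidableEq V] (G H : Finset (V × V)) (s : V) (lam k : ℕ) : Prop :=
  H ⊆ G ∧ ∀ F : Finset (V × V), F.card ≤ k → ∀ t : V,
    (maxFlow (G \ F) s t ≤ lam → maxFlow (H \ F) s t = maxFlow (G \ F) s t) ∧
    (lam < maxFlow (G \ F) s t → lam ≤ maxFlow (H \ F) s t)

/-- `H` is a `j`-fault-tolerant reachability subgraph of `G` w.r.t. source `s`. -/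
def IsFTRS {V : Type*} [DecidableEq V] (G H : Finset (V × V)) (s : V) (j : ℕ) : Prop :=
  H ⊆ G ∧ ∀ F : Finset (V × V), F.card ≤ j → ∀ t : V,
    (Reach (H \ F) s t ↔ Reach (G \ F) s t)

def IsCut {V : Type*} (A : Finset V) (s t : V) : Prop := s ∈ A ∧ t ∉ A

/-- Number of edges of `G` from `A` to its complement. -/
def cutVal {V : Type*} [DecidableEq V] (G : Finset (V × V)) (A : Finset V) : ℕ :=
  (G.filter fun e => e.1 ∈ A ∧ e.2 ∉ A).card

def IsMinCut {V : Type*} [DecidableEq V] (G : Finset (V × V)) (s t : V) (A : Finset V) : Prop :=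
  IsCut A s t ∧ ∀ B : Finset V, IsCut B s t → cutVal G A ≤ cutVal G B

def IsCutS {V : Type*} (S : Finset V) (t : V) (A : Finset V) : Prop := S ⊆ A ∧ t ∉ A

def IsMinCutS {V : Type*} [DecidableEq V] (G : Finset (V × V)) (S : Finset V) (t : V)
    (A : Finset V) : Prop :=
  IsCutS S t A ∧ ∀ B : Finset V, IsCutS S t B → cutVal G A ≤ cutVal G B

/-- Farthest min-cut: the min-cut whose source side contains the source side of
every min-cut. -/
def IsFMC {V : Type*} [DecidableEq V] (G : Finset (V × V)) (S : Finset V) (t : V)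
    (A : Finset V) : Prop :=
  IsMinCutS G S t A ∧ ∀ B : Finset V, IsMinCutS G S t B → B ⊆ A

/-- Vertices outside `A` with an in-edge from `A`. -/
def outSet {V : Type*} [DecidableEq V] (G : Finset (V × V)) (A : Finset V) : Finset V :=
  (G.filter fun e => e.1 ∈ A ∧ e.2 ∉ A).image Prod.snd

open scoped Classical

/-- Vertices of the set-cover reduction graph: the source `s`; the nodes of `lam`
disjoint complete binary trees of height `u` (heap-indexed, leaves correspond to the
elements of `U`); the vertices `ℓ(x_i)` (`false`) and `r(x_i)` (`true`); the set
vertices `y_{i,W}` (`W` indexed by `ι`); the `u+1` vertices of each `Z_i`; and the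
`N` sink vertices `v_1, …, v_N`. -/
abbrev SCV (lam u N : ℕ) (U ι : Type*) :=
  Unit ⊕ (Fin lam × Fin (2 ^ (u + 1) - 1)) ⊕ (Fin lam × U × Bool) ⊕ (Fin lam × ι) ⊕
    (Fin lam × Fin (u + 1)) ⊕ Fin N

variable {lam u N : ℕ} {U ι : Type*}

def yV (i : Fin lam) (w : ι) : SCV lam u N U ι :=
  Sum.inr (Sum.inr (Sum.inr (Sum.inl (i, w))))

def zV (i : Fin lam) (c : Fin (u + 1)) : SCV lam u N U ι :=
  Sum.inr (Sum.inr (Sum.inr (Sum.inr (Sum.inl (i, c)))))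

def sinkV (j : Fin N) : SCV lam u N U ι :=
  Sum.inr (Sum.inr (Sum.inr (Sum.inr (Sum.inr j))))

/-- Edges of the set-cover reduction graph (sets `Sw : ι → Finset U`, the bijection
`elem` identifies the `2^u` heap leaves with the elements of `U`): `s → r_i`; the
tree edges; each leaf `x_i` to `ℓ(x_i)` and `r(x_i)`; `ℓ(x_i) → y_{i,W}` iff
`x ∈ W`; `r(x_i) → Z_i` (all of it); and every vertex of `Y_i ∪ Z_i` to every
sink `v_j`. -/
def scEdge (lam u N : ℕ) (U ι : Type*) (Sw : ι → Finset U) (elem : Fin (2 ^ u) ≃ U) :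
    SCV lam u N U ι × SCV lam u N U ι → Prop := fun e =>
  match e with
  | (Sum.inl _, Sum.inr (Sum.inl (_, a))) => (a : ℕ) = 0
  | (Sum.inr (Sum.inl (i, a)), Sum.inr (Sum.inl (i2, b))) =>
      i = i2 ∧ ((b : ℕ) = 2 * (a : ℕ) + 1 ∨ (b : ℕ) = 2 * (a : ℕ) + 2)
  | (Sum.inr (Sum.inl (i, a)), Sum.inr (Sum.inr (Sum.inl (i2, x, _)))) =>
      i = i2 ∧ ∃ j : Fin (2 ^ u), (a : ℕ) = 2 ^ u - 1 + (j : ℕ) ∧ elem j = x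
  | (Sum.inr (Sum.inr (Sum.inl (i, x, false))), Sum.inr (Sum.inr (Sum.inr (Sum.inl (i2, w))))) =>
      i = i2 ∧ x ∈ Sw w
  | (Sum.inr (Sum.inr (Sum.inl (i, _, true))), Sum.inr (Sum.inr (Sum.inr (Sum.inr (Sum.inl (i2, _)))))) =>
      i = i2
  | (Sum.inr (Sum.inr (Sum.inr (Sum.inl _))), Sum.inr (Sum.inr (Sum.inr (Sum.inr (Sum.inr _))))) =>
      True
  | (Sum.inr (Sum.inr (Sum.inr (Sum.inr (Sum.inl _)))), Sum.inr (Sum.inr (Sum.inr (Sum.inr (Sum.inr _))))) =>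
      True
  | _ => False

noncomputable def scGraph (lam u N : ℕ) (U ι : Type*) [Fintype U] [Fintype ι]
    (Sw : ι → Finset U) (elem : Fin (2 ^ u) ≃ U) :
    Finset (SCV lam u N U ι × SCV lam u N U ι) :=
  Finset.univ.filter (scEdge lam u N U ι Sw elem)


namespace SC16


def nodeIdx (u jj d : ℕ) : ℕ := 2 ^ d - 1 + jj / 2 ^ (u - d)

lemma nodeIdx_zero {u jj : ℕ} (h : jj < 2 ^ u) : nodeIdx u jj 0 = 0 := by
  simp [nodeIdx, Nat.div_eq_of_lt h]

lemma nodeIdx_last (u jj : ℕ) : nodeIdx u jj u = 2 ^ u - 1 + jj := by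
  simp [nodeIdx]

lemma nodeIdx_lt {u jj d : ℕ} (hd : d ≤ u) (h : jj < 2 ^ u) :
    nodeIdx u jj d < 2 ^ (d + 1) - 1 := by
  have h1 : jj / 2 ^ (u - d) < 2 ^ d := by
    apply Nat.div_lt_of_lt_mul
    calc jj < 2 ^ u := h
    _ = 2 ^ (u - d) * 2 ^ d := by rw [← pow_add]; congr 1; omega
  have h2 : (1:ℕ) ≤ 2 ^ d := Nat.one_le_two_pow
  simp only [nodeIdx, pow_succ]
  omega

lemma nodeIdx_ge (u jj d : ℕ) : 2 ^ d - 1 ≤ nodeIdx u jj d := Nat.le_add_right _ _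

lemma nodeIdx_inj {u jj d d' : ℕ} (hd : d ≤ u) (hd' : d' ≤ u) (h : jj < 2 ^ u)
    (heq : nodeIdx u jj d = nodeIdx u jj d') : d = d' := by
  rcases lt_trichotomy d d' with hlt | he | hlt
  · have h1 := nodeIdx_lt hd h
    have h2 := nodeIdx_ge u jj d'
    have h3 : 2 ^ (d + 1) ≤ 2 ^ d' := Nat.pow_le_pow_right (by norm_num) hlt
    omega
  · exact he
  · have h1 := nodeIdx_lt hd' h
    have h2 := nodeIdx_ge u jj d
    have h3 : 2 ^ (d' + 1) ≤ 2 ^ d := Nat.pow_le_pow_right (by norm_num) hlt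
    omega

lemma nodeIdx_step {u jj d : ℕ} (hd : d < u) :
    nodeIdx u jj (d + 1) = 2 * nodeIdx u jj d + 1 + (jj / 2 ^ (u - d - 1)) % 2 := by
  have h1 : u - d = (u - d - 1) + 1 := by omega
  have h2 : jj / 2 ^ (u - d) = (jj / 2 ^ (u - d - 1)) / 2 := by
    conv_lhs => rw [h1]
    rw [pow_succ, ← Nat.div_div_eq_div_mul]
  have h3 := Nat.div_add_mod (jj / 2 ^ (u - d - 1)) 2
  have h4 : (1:ℕ) ≤ 2 ^ d := Nat.one_le_two_pow
  have h5 : u - (d + 1) = u - d - 1 := by omega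
  simp only [nodeIdx, pow_succ, h5]
  omega

def sibIdx (u jj d : ℕ) : ℕ := 2 * nodeIdx u jj d + 1 + (1 - (jj / 2 ^ (u - d - 1)) % 2)

lemma sibIdx_lt {u jj d : ℕ} (hd : d < u) (h : jj < 2 ^ u) :
    sibIdx u jj d < 2 ^ (u + 1) - 1 := by
  have h1 := nodeIdx_lt (le_of_lt hd) h
  have h2 : 2 ^ (d + 2) ≤ 2 ^ (u + 1) := Nat.pow_le_pow_right (by norm_num) (by omega)
  have h3 : (jj / 2 ^ (u - d - 1)) % 2 ≤ 1 := Nat.le_of_lt_succ (Nat.mod_lt _ (by norm_num))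
  have h4 : 2 ^ (d + 2) = 2 * 2 ^ (d + 1) := by ring
  unfold sibIdx
  omega

lemma nodeIdx_lt' {u jj d : ℕ} (hd : d ≤ u) (h : jj < 2 ^ u) :
    nodeIdx u jj d < 2 ^ (u + 1) - 1 := by
  have h1 := nodeIdx_lt hd h
  have h2 : 2 ^ (d + 1) ≤ 2 ^ (u + 1) := Nat.pow_le_pow_right (by norm_num) (by omega)
  omega




section
variable {lam u N : ℕ} {U ι : Type*}

abbrev sV : SCV lam u N U ι := Sum.inl ()
abbrev tV (i : Fin lam) (a : Fin (2 ^ (u + 1) - 1)) : SCV lam u N U ι := Sum.inr (Sum.inl (i, a))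
abbrev xVert (i : Fin lam) (x : U) (b : Bool) : SCV lam u N U ι :=
  Sum.inr (Sum.inr (Sum.inl (i, x, b)))

lemma Mpos : 0 < 2 ^ (u + 1) - 1 := by
  have : (2:ℕ) ≤ 2 ^ (u + 1) := by
    calc (2:ℕ) = 2 ^ 1 := rfl
    _ ≤ 2 ^ (u+1) := Nat.pow_le_pow_right (by norm_num) (by omega)
  omega

def nodeF (u jj d : ℕ) : Fin (2 ^ (u + 1) - 1) :=
  ⟨min (nodeIdx u jj d) (2 ^ (u + 1) - 2), by
    have : (2:ℕ) ≤ 2 ^ (u + 1) := by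
      calc (2:ℕ) = 2 ^ 1 := rfl
      _ ≤ 2 ^ (u+1) := Nat.pow_le_pow_right (by norm_num) (by omega)
    omega⟩

def sibF (u jj d : ℕ) : Fin (2 ^ (u + 1) - 1) :=
  ⟨min (sibIdx u jj d) (2 ^ (u + 1) - 2), by
    have : (2:ℕ) ≤ 2 ^ (u + 1) := by
      calc (2:ℕ) = 2 ^ 1 := rfl
      _ ≤ 2 ^ (u+1) := Nat.pow_le_pow_right (by norm_num) (by omega)
    omega⟩

lemma nodeF_val {u jj d : ℕ} (hd : d ≤ u) (h : jj < 2 ^ u) :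
    (nodeF u jj d : ℕ) = nodeIdx u jj d := by
  have := nodeIdx_lt' hd h
  simp only [nodeF]
  omega

lemma sibF_val {u jj d : ℕ} (hd : d < u) (h : jj < 2 ^ u) :
    (sibF u jj d : ℕ) = sibIdx u jj d := by
  have := sibIdx_lt hd h
  simp only [sibF]
  omega

variable [Fintype U] [Fintype ι]

lemma mem_scGraph {Sw : ι → Finset U} {elem : Fin (2 ^ u) ≃ U}
    {e : SCV lam u N U ι × SCV lam u N U ι} :
    e ∈ scGraph lam u N U ι Sw elem ↔ scEdge lam u N U ι Sw elem e := by
  simp [scGraph]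

/-- The failure set isolating the leaf of `x` in tree `i`. -/
noncomputable def FSet (Sw : ι → Finset U) (elem : Fin (2 ^ u) ≃ U) (i : Fin lam) (x : U) :
    Finset (SCV lam u N U ι × SCV lam u N U ι) :=
  ((Finset.range u).image fun d =>
      (tV i (nodeF u (elem.symm x) d), tV i (sibF u (elem.symm x) d))) ∪
    {(tV i (nodeF u (elem.symm x) u), xVert i x true)}

lemma FSet_card (Sw : ι → Finset U) (elem : Fin (2 ^ u) ≃ U) (i : Fin lam) (x : U) :
    (FSet (N := N) Sw elem i x).card ≤ u + 1 := by
  calc (FSet (N := N) Sw elem i x).card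
      ≤ _ + _ := Finset.card_union_le _ _
    _ ≤ u + 1 := by
        gcongr
        · exact (Finset.card_image_le).trans (by simp)
        · simp

end

section
variable {lam u N : ℕ} {U ι : Type*}

lemma EDP_zero {V : Type*} (G : Finset (V × V)) (s t : V) : EDP G s t 0 :=
  ⟨fun i => i.elim0, fun i => i.elim0, fun i => i.elim0⟩

lemma EDP_mono_r {V : Type*} {G : Finset (V × V)} {s t : V} {r r' : ℕ}
    (h : EDP G s t r) (hle : r' ≤ r) : EDP G s t r' := by
  obtain ⟨ps, h1, h2⟩ := h
  exact ⟨ps ∘ Fin.castLE hle, fun i => h1 _, fun i j hij e he =>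
    h2 _ _ (fun hc => hij (Fin.castLE_injective hle hc)) e he⟩

lemma path_head {V : Type*} {G : Finset (V × V)} {s t : V} {p : List (V × V)}
    (hp : IsPath G s t p) : ∃ e rest, p = e :: rest ∧ e ∈ G ∧ e.1 = s := by
  obtain ⟨hne, hmem, _, hhead, _⟩ := hp
  cases p with
  | nil => exact absurd rfl hne
  | cons e rest =>
    refine ⟨e, rest, rfl, hmem e (by simp), ?_⟩
    simpa using hhead

variable [Fintype U] [Fintype ι] {Sw : ι → Finset U} {elem : Fin (2 ^ u) ≃ U}

lemma head_from_source {G' : Finset (SCV lam u N U ι × SCV lam u N U ι)}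
    (hsub : G' ⊆ scGraph lam u N U ι Sw elem) {t : SCV lam u N U ι} {p : List _}
    (hp : IsPath G' sV t p) :
    ∃ (i' : Fin lam) (rest : List _), p = (sV, tV i' ⟨0, Mpos⟩) :: rest := by
  obtain ⟨e, rest, hpe, heG, he1⟩ := path_head hp
  have hsc : scEdge lam u N U ι Sw elem e := mem_scGraph.mp (hsub heG)
  obtain ⟨e1, e2⟩ := e
  cases he1
  rcases e2 with _ | (⟨i2, b⟩ | (⟨i2, x2, b2⟩ | (⟨i2, w2⟩ | (⟨i2, c2⟩ | j2)))) <;>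
    simp only [scEdge] at hsc
  have hb : b = (⟨0, Mpos⟩ : Fin (2 ^ (u + 1) - 1)) := Fin.ext (by simpa using hsc)
  exact ⟨i2, rest, by rw [hpe, hb]⟩

lemma EDP_le_lam {G' : Finset (SCV lam u N U ι × SCV lam u N U ι)}
    (hsub : G' ⊆ scGraph lam u N U ι Sw elem) {t : SCV lam u N U ι} {r : ℕ}
    (h : EDP G' sV t r) : r ≤ lam := by
  obtain ⟨ps, hpath, hdisj⟩ := h
  have hhead : ∀ i₀ : Fin r, ∃ (i' : Fin lam) (rest : List _),
      ps i₀ = (sV, tV i' ⟨0, Mpos⟩) :: rest := fun i₀ => head_from_source hsub (hpath i₀)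
  choose f rest hf using hhead
  have hinj : Function.Injective f := by
    intro i₀ i₁ hfe
    by_contra hne
    have h1 : ((sV : SCV lam u N U ι), tV (f i₀) ⟨0, Mpos⟩) ∈ ps i₀ := by rw [hf i₀]; simp
    have h2 : ((sV : SCV lam u N U ι), tV (f i₀) ⟨0, Mpos⟩) ∈ ps i₁ := by
      rw [hf i₁, hfe]; simp
    exact hdisj i₀ i₁ hne _ h1 h2
  simpa using Fintype.card_le_of_injective f hinj

lemma bddAbove_EDP {G' : Finset (SCV lam u N U ι × SCV lam u N U ι)}
    (hsub : G' ⊆ scGraph lam u N U ι Sw elem) (t : SCV lam u N U ι) :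
    BddAbove {r | EDP G' sV t r} :=
  ⟨lam, fun _ hr => EDP_le_lam hsub hr⟩

lemma EDP_of_le_maxFlow {G' : Finset (SCV lam u N U ι × SCV lam u N U ι)}
    (hsub : G' ⊆ scGraph lam u N U ι Sw elem) {t : SCV lam u N U ι}
    (h : lam ≤ maxFlow G' sV t) : EDP G' sV t lam := by
  have hmem : maxFlow G' sV t ∈ {r | EDP G' sV t r} :=
    Nat.sSup_mem ⟨0, EDP_zero G' sV t⟩ (bddAbove_EDP hsub t)
  exact EDP_mono_r hmem h

lemma le_maxFlow {V : Type*} {G : Finset (V × V)} {s t : V} {r : ℕ}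
    (h : EDP G s t r) (hb : BddAbove {r | EDP G s t r}) : r ≤ maxFlow G s t :=
  le_csSup hb h

end
section
variable {lam u N : ℕ} {U ι : Type*} [Fintype U] [Fintype ι]
variable {Sw : ι → Finset U} {elem : Fin (2 ^ u) ≃ U}

lemma sib_mem_FSet {i : Fin lam} {x : U} {d : ℕ} (hd : d < u) :
    (tV i (nodeF u (elem.symm x) d), tV i (sibF u (elem.symm x) d)) ∈
      FSet (N := N) Sw elem i x := by
  apply Finset.mem_union_left
  exact Finset.mem_image.mpr ⟨d, Finset.mem_range.mpr hd, rfl⟩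

lemma leaf_mem_FSet {i : Fin lam} {x : U} :
    (tV i (nodeF u (elem.symm x) u), xVert i x true) ∈ FSet (N := N) Sw elem i x :=
  Finset.mem_union_right _ (Finset.mem_singleton_self _)

lemma force (i : Fin lam) (x : U) (j0 : Fin N)
    (E : Finset (SCV lam u N U ι × SCV lam u N U ι))
    (hE : ∀ e ∈ E, scEdge lam u N U ι Sw elem e ∧ e ∉ FSet (N := N) Sw elem i x) :
    ∀ p : List (SCV lam u N U ι × SCV lam u N U ι),
      (∀ e ∈ p, e ∈ E) → List.Chain' (fun e f => e.2 = f.1) p →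
      ∀ v : SCV lam u N U ι,
        ((∃ d ≤ u, v = tV i (nodeF u (elem.symm x) d)) ∨ v = xVert i x false ∨
          (∃ w, x ∈ Sw w ∧ v = yV i w)) →
        p.head?.map Prod.fst = some v → p.getLast?.map Prod.snd = some (sinkV j0) →
        ∃ w, x ∈ Sw w ∧ (yV i w, sinkV j0) ∈ E := by
  intro p
  induction p with
  | nil => intro _ _ v _ hh _; simp at hh
  | cons e rest ih =>
    intro hmem hchain v hgood hhead hlast
    obtain ⟨e1, e2⟩ := e
    have hh1 : e1 = v := by simpa using hhead
    subst hh1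
    obtain ⟨hsc, hnF⟩ := hE (e1, e2) (hmem (e1, e2) (List.mem_cons_self))
    have hjx : ((elem.symm x : Fin (2 ^ u)) : ℕ) < 2 ^ u := (elem.symm x).isLt
    set jx : ℕ := ((elem.symm x : Fin (2 ^ u)) : ℕ) with hjxdef
    rcases hgood with ⟨d, hd, rfl⟩ | rfl | ⟨w, hw, rfl⟩
    · -- tree node at depth d
      rcases e2 with _ | (⟨i2, b⟩ | (⟨i2, x2, b2⟩ | (⟨i2, w2⟩ | (⟨i2, c2⟩ | j2)))) <;>
        simp only [scEdge, tV, xVert, yV, zV, sinkV] at hsc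
      · -- tree child
        obtain ⟨rfl, hb⟩ := hsc
        rw [nodeF_val hd hjx] at hb
        have h2u : (2:ℕ) ^ (u + 1) = 2 * 2 ^ u := by ring
        have hdu : d < u := by
          by_contra h'
          have hdeq : d = u := by omega
          rw [hdeq, nodeIdx_last] at hb
          have hblt := b.isLt
          have h1 : (1:ℕ) ≤ 2 ^ u := Nat.one_le_two_pow
          omega
        have hne : b ≠ sibF u jx d := by
          intro hbe
          exact hnF (by rw [hbe]; exact sib_mem_FSet hdu)
        have hbval : (b : ℕ) = nodeIdx u jx (d + 1) := by
          have h1 : (b : ℕ) ≠ sibIdx u jx d := fun hh =>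
            hne (Fin.ext (by rw [sibF_val hdu hjx]; exact hh))
          have h2 := nodeIdx_step (jj := jx) hdu
          have h3 : (jx / 2 ^ (u - d - 1)) % 2 ≤ 1 :=
            Nat.le_of_lt_succ (Nat.mod_lt _ (by norm_num))
          unfold sibIdx at h1
          omega
        have hbF : b = nodeF u jx (d + 1) :=
          Fin.ext (by rw [nodeF_val (by omega) hjx]; exact hbval)
        subst hbF
        cases rest with
        | nil => simp [sinkV] at hlast
        | cons e' rest' =>
          obtain ⟨hce, hcr⟩ := List.isChain_cons_cons.mp hchain
          refine ih (fun f hf => hmem f (by simp [hf])) hcr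
            (tV i (nodeF u jx (d + 1))) (Or.inl ⟨d + 1, by omega, rfl⟩) ?_ ?_
          · simp only [List.head?_cons, Option.map_some]
            exact hce ▸ rfl
          · rw [← hlast, List.getLast?_cons_cons]
      · -- leaf to x-vertex
        obtain ⟨rfl, j', hj', hx2⟩ := hsc
        rw [nodeF_val hd hjx] at hj'
        have h1 : (1:ℕ) ≤ 2 ^ u := Nat.one_le_two_pow
        have hdu : d = u := by
          by_contra h'
          have hlt : d < u := by omega
          have h2 := nodeIdx_lt (le_of_lt hlt) hjx
          have h3 : 2 ^ (d + 1) ≤ 2 ^ u := Nat.pow_le_pow_right (by norm_num) (by omega)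
          omega
        subst hdu
        rw [nodeIdx_last] at hj'
        have hj'' : j' = elem.symm x := Fin.ext (by omega)
        subst hj''
        rw [Equiv.apply_symm_apply] at hx2
        subst hx2
        cases b2 with
        | true => exact absurd leaf_mem_FSet hnF
        | false =>
          cases rest with
          | nil => simp [sinkV] at hlast
          | cons e' rest' =>
            obtain ⟨hce, hcr⟩ := List.isChain_cons_cons.mp hchain
            refine ih (fun f hf => hmem f (by simp [hf])) hcr
              (xVert i x false) (Or.inr (Or.inl rfl)) ?_ ?_
            · simp only [List.head?_cons, Option.map_some]
              exact hce ▸ rfl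
            · rw [← hlast, List.getLast?_cons_cons]
    · -- x-vertex (ℓ(x_i))
      rcases e2 with _ | (⟨i2, b⟩ | (⟨i2, x2, b2⟩ | (⟨i2, w2⟩ | (⟨i2, c2⟩ | j2)))) <;>
        simp only [scEdge, tV, xVert, yV, zV, sinkV] at hsc
      obtain ⟨rfl, hw2⟩ := hsc
      cases rest with
      | nil => simp [sinkV] at hlast
      | cons e' rest' =>
        obtain ⟨hce, hcr⟩ := List.isChain_cons_cons.mp hchain
        refine ih (fun f hf => hmem f (by simp [hf])) hcr
          (yV i w2) (Or.inr (Or.inr ⟨w2, hw2, rfl⟩)) ?_ ?_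
        · simp only [List.head?_cons, Option.map_some]
          exact hce ▸ rfl
        · rw [← hlast, List.getLast?_cons_cons]
    · -- y-vertex
      rcases e2 with _ | (⟨i2, b⟩ | (⟨i2, x2, b2⟩ | (⟨i2, w2⟩ | (⟨i2, c2⟩ | j2)))) <;>
        simp only [scEdge, tV, xVert, yV, zV, sinkV] at hsc
      cases rest with
      | nil =>
        have hj2 : j2 = j0 := by simpa [sinkV] using hlast
        subst hj2
        exact ⟨w, hw, hmem _ (List.mem_cons_self)⟩
      | cons e' rest' =>
        obtain ⟨hce, hcr⟩ := List.isChain_cons_cons.mp hchain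
        obtain ⟨hsc', _⟩ := hE e' (hmem e' (List.mem_cons_of_mem _ (List.mem_cons_self)))
        obtain ⟨f1, f2⟩ := e'
        have hf1 : f1 = sinkV j2 := by simpa [sinkV] using hce.symm
        subst hf1
        rcases f2 with _ | (⟨i3, b3⟩ | (⟨i3, x3, b3⟩ | (⟨i3, w3⟩ | (⟨i3, c3⟩ | j3)))) <;>
          simp only [scEdge, sinkV] at hsc'
end
section
variable {lam u N : ℕ} {U ι : Type*} [Fintype U] [Fintype ι]
variable {Sw : ι → Finset U}

/-- Vertex sequence of the canonical `s`–sink path in tree `i'`. -/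
noncomputable def vtx (elem : Fin (2 ^ u) ≃ U) (i : Fin lam) (x : U) (j0 : Fin N) (w0 : ι)
    (i' : Fin lam) (t : ℕ) : SCV lam u N U ι :=
  if t = 0 then sV
  else if t ≤ u + 1 then tV i' (nodeF u (elem.symm x) (t - 1))
  else if t = u + 2 then xVert i' x (if i' = i then false else true)
  else if t = u + 3 then (if i' = i then yV i w0 else zV i' ⟨0, Nat.succ_pos u⟩)
  else sinkV j0

variable {elem : Fin (2 ^ u) ≃ U} {i i' : Fin lam} {x : U} {j0 : Fin N} {w0 : ι}

lemma vtx_0 : vtx elem i x j0 w0 i' 0 = sV := by simp [vtx]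

lemma vtx_mid {t : ℕ} (h1 : 1 ≤ t) (h2 : t ≤ u + 1) :
    vtx elem i x j0 w0 i' t = tV i' (nodeF u (elem.symm x) (t - 1)) := by
  rw [vtx, if_neg (by omega), if_pos h2]

lemma vtx_u2 :
    vtx elem i x j0 w0 i' (u + 2) = xVert i' x (if i' = i then false else true) := by
  rw [vtx, if_neg (by omega), if_neg (by omega), if_pos rfl]

lemma vtx_u3 :
    vtx elem i x j0 w0 i' (u + 3) =
      (if i' = i then yV i w0 else zV i' ⟨0, Nat.succ_pos u⟩) := by
  rw [vtx, if_neg (by omega), if_neg (by omega), if_neg (by omega), if_pos rfl]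

lemma vtx_u4 : vtx elem i x j0 w0 i' (u + 4) = sinkV j0 := by
  rw [vtx, if_neg (by omega), if_neg (by omega), if_neg (by omega), if_neg (by omega)]

noncomputable def pathP (elem : Fin (2 ^ u) ≃ U) (i : Fin lam) (x : U) (j0 : Fin N) (w0 : ι)
    (i' : Fin lam) : List (SCV lam u N U ι × SCV lam u N U ι) :=
  (List.range (u + 4)).map fun t => (vtx elem i x j0 w0 i' t, vtx elem i x j0 w0 i' (t + 1))

lemma pathP_mem (Sw : ι → Finset U) (hw0 : x ∈ Sw w0) {t : ℕ} (ht : t < u + 4) :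
    (vtx elem i x j0 w0 i' t, vtx elem i x j0 w0 i' (t + 1)) ∈ scGraph lam u N U ι Sw elem ∧
      (vtx elem i x j0 w0 i' t, vtx elem i x j0 w0 i' (t + 1)) ∉ FSet (N := N) Sw elem i x := by
  have hjx : ((elem.symm x : Fin (2 ^ u)) : ℕ) < 2 ^ u := (elem.symm x).isLt
  set jx : ℕ := ((elem.symm x : Fin (2 ^ u)) : ℕ)
  by_cases h0 : t = 0
  · subst h0
    rw [vtx_0, vtx_mid le_rfl (by omega)]
    constructor
    · rw [mem_scGraph]
      simp only [scEdge, sV, tV]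
      rw [nodeF_val (Nat.zero_le u) hjx, nodeIdx_zero hjx]
    · intro hm
      rcases Finset.mem_union.mp hm with hm | hm
      · obtain ⟨d, _, heq⟩ := Finset.mem_image.mp hm
        exact absurd (congrArg Prod.fst heq) (by simp [tV, sV])
      · exact absurd (Finset.mem_singleton.mp hm) (by simp [Prod.ext_iff, tV, sV])
  by_cases h1 : t ≤ u
  · have h1' : 1 ≤ t := by omega
    have htd : t - 1 < u := by omega
    have htd1 : t - 1 + 1 = t := by omega
    rw [vtx_mid h1' (by omega), vtx_mid (by omega) (by omega),
      show t + 1 - 1 = t from by omega]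
    have hstep := nodeIdx_step (jj := jx) htd
    rw [htd1] at hstep
    have hmod : (jx / 2 ^ (u - (t - 1) - 1)) % 2 ≤ 1 :=
      Nat.le_of_lt_succ (Nat.mod_lt _ (by norm_num))
    constructor
    · rw [mem_scGraph]
      simp only [scEdge, tV]
      refine ⟨by trivial, ?_⟩
      rw [nodeF_val (by omega) hjx, nodeF_val (by omega) hjx]
      rcases Nat.mod_two_eq_zero_or_one (jx / 2 ^ (u - (t - 1) - 1)) with hm2 | hm2
      · left; omega
      · right; omega
    · intro hm
      rcases Finset.mem_union.mp hm with hm | hm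
      · obtain ⟨d, hd, heq⟩ := Finset.mem_image.mp hm
        rw [Finset.mem_range] at hd
        rw [Prod.mk.injEq] at heq
        obtain ⟨hA, hB⟩ := heq
        simp only [tV, Sum.inr.injEq, Sum.inl.injEq, Prod.mk.injEq] at hA hB
        obtain ⟨hii, hval⟩ := hA
        have hv1 : nodeIdx u jx d = nodeIdx u jx (t - 1) := by
          have := congrArg Fin.val hval
          rwa [nodeF_val (by omega) hjx, nodeF_val (by omega) hjx] at this
        have hdd : d = t - 1 := nodeIdx_inj (by omega) (by omega) hjx hv1
        subst hdd
        have hv2 := congrArg Fin.val hB.2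
        rw [sibF_val hd hjx, nodeF_val (by omega) hjx] at hv2
        unfold sibIdx at hv2
        omega
      · have := congrArg Prod.snd (Finset.mem_singleton.mp hm)
        exact absurd this (by simp [tV, xVert])
  by_cases h2 : t = u + 1
  · subst h2
    rw [vtx_mid (by omega) le_rfl, vtx_u2]
    have hlf : (nodeF u jx ((u + 1) - 1) : ℕ) = 2 ^ u - 1 + jx := by
      rw [Nat.add_sub_cancel, nodeF_val le_rfl hjx, nodeIdx_last]
    constructor
    · rw [mem_scGraph]
      simp only [scEdge, tV, xVert]
      exact ⟨by trivial, elem.symm x, hlf, Equiv.apply_symm_apply elem x⟩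
    · intro hm
      rcases Finset.mem_union.mp hm with hm | hm
      · obtain ⟨d, _, heq⟩ := Finset.mem_image.mp hm
        exact absurd (congrArg Prod.snd heq) (by simp [tV, xVert])
      · have heq := Finset.mem_singleton.mp hm
        rw [Prod.mk.injEq] at heq
        obtain ⟨hA, hB⟩ := heq
        simp only [tV, xVert, Sum.inr.injEq, Sum.inl.injEq, Prod.mk.injEq] at hA hB
        have hb := hB.2.2
        rw [if_pos hB.1] at hb
        exact Bool.noConfusion hb
  by_cases h3 : t = u + 2
  · subst h3
    rw [vtx_u2, vtx_u3]
    by_cases hii : i' = i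
    · subst hii
      rw [if_pos rfl, if_pos rfl]
      constructor
      · rw [mem_scGraph]
        simp only [scEdge, xVert, yV]
        exact ⟨by trivial, hw0⟩
      · intro hm
        rcases Finset.mem_union.mp hm with hm | hm
        · obtain ⟨d, _, heq⟩ := Finset.mem_image.mp hm
          exact absurd (congrArg Prod.fst heq) (by simp [tV, xVert])
        · exact absurd (congrArg Prod.fst (Finset.mem_singleton.mp hm))
            (by simp [tV, xVert])
    · rw [if_neg hii, if_neg hii]
      constructor
      · rw [mem_scGraph]
        simp only [scEdge, xVert, zV]
      · intro hm
        rcases Finset.mem_union.mp hm with hm | hm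
        · obtain ⟨d, _, heq⟩ := Finset.mem_image.mp hm
          exact absurd (congrArg Prod.fst heq) (by simp [tV, xVert])
        · exact absurd (congrArg Prod.fst (Finset.mem_singleton.mp hm))
            (by simp [tV, xVert])
  · have h4 : t = u + 3 := by omega
    subst h4
    rw [vtx_u3, vtx_u4]
    by_cases hii : i' = i <;> [rw [if_pos hii]; rw [if_neg hii]]
    · constructor
      · rw [mem_scGraph]; simp only [scEdge, yV, sinkV]
      · intro hm
        rcases Finset.mem_union.mp hm with hm | hm
        · obtain ⟨d, _, heq⟩ := Finset.mem_image.mp hm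
          exact absurd (congrArg Prod.fst heq) (by simp [tV, yV])
        · exact absurd (congrArg Prod.fst (Finset.mem_singleton.mp hm))
            (by simp [tV, yV])
    · constructor
      · rw [mem_scGraph]; simp only [scEdge, zV, sinkV]
      · intro hm
        rcases Finset.mem_union.mp hm with hm | hm
        · obtain ⟨d, _, heq⟩ := Finset.mem_image.mp hm
          exact absurd (congrArg Prod.fst heq) (by simp [tV, zV])
        · exact absurd (congrArg Prod.fst (Finset.mem_singleton.mp hm))
            (by simp [tV, zV])

lemma pathP_isPath (Sw : ι → Finset U) (hw0 : x ∈ Sw w0)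
    (D : Finset (SCV lam u N U ι × SCV lam u N U ι))
    (hD : ∀ e, e ∈ scGraph lam u N U ι Sw elem → e ∉ FSet (N := N) Sw elem i x → e ∈ D) :
    IsPath D sV (sinkV j0) (pathP elem i x j0 w0 i') := by
  refine ⟨by simp [pathP], ?_, ?_, ?_, ?_⟩
  · intro e he
    obtain ⟨t, ht, rfl⟩ := List.mem_map.mp he
    exact hD _ (pathP_mem Sw hw0 (List.mem_range.mp ht)).1
      (pathP_mem Sw hw0 (List.mem_range.mp ht)).2
  · rw [pathP]; show List.IsChain _ _; rw [List.isChain_map]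
    have : u + 4 = (u + 3) + 1 := rfl
    rw [this, List.isChain_range_succ]
    intro m _
    rfl
  · rw [pathP, List.range_succ_eq_map]
    simp [vtx_0]
  · rw [pathP, List.range_succ, List.map_append]
    rw [List.getLast?_append_of_ne_nil _ (by simp)]
    simp [vtx_u4]

def idxOf : SCV lam u N U ι → Option (Fin lam)
  | Sum.inl _ => none
  | Sum.inr (Sum.inl (i', _)) => some i'
  | Sum.inr (Sum.inr (Sum.inl (i', _, _))) => some i'
  | Sum.inr (Sum.inr (Sum.inr (Sum.inl (i', _)))) => some i'
  | Sum.inr (Sum.inr (Sum.inr (Sum.inr (Sum.inl (i', _))))) => some i'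
  | Sum.inr (Sum.inr (Sum.inr (Sum.inr (Sum.inr _)))) => none

lemma pathP_edge_idx {e : SCV lam u N U ι × SCV lam u N U ι}
    (he : e ∈ pathP elem i x j0 w0 i') :
    (e.1 = sV ∧ idxOf e.2 = some i') ∨ idxOf e.1 = some i' := by
  obtain ⟨t, ht, rfl⟩ := List.mem_map.mp he
  rw [List.mem_range] at ht
  by_cases h0 : t = 0
  · subst h0
    left
    rw [vtx_0, vtx_mid le_rfl (by omega)]
    exact ⟨rfl, rfl⟩
  · right
    by_cases h1 : t ≤ u + 1
    · rw [vtx_mid (by omega) h1]; rfl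
    by_cases h2 : t = u + 2
    · subst h2; rw [vtx_u2]; rfl
    · have h3 : t = u + 3 := by omega
      subst h3
      rw [vtx_u3]
      by_cases hii : i' = i
      · rw [if_pos hii, hii]; rfl
      · rw [if_neg hii]; rfl

lemma pathP_disjoint {i1 i2 : Fin lam} (hne : i1 ≠ i2)
    {e : SCV lam u N U ι × SCV lam u N U ι} (he1 : e ∈ pathP elem i x j0 w0 i1) :
    e ∉ pathP elem i x j0 w0 i2 := by
  intro he2
  rcases pathP_edge_idx he1 with ⟨hs1, hi1⟩ | hi1 <;>
    rcases pathP_edge_idx he2 with ⟨hs2, hi2⟩ | hi2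
  · exact hne (Option.some_injective _ (hi1.symm.trans hi2))
  · rw [hs1] at hi2; simp [idxOf] at hi2
  · rw [hs2] at hi1; simp [idxOf] at hi1
  · exact hne (Option.some_injective _ (hi1.symm.trans hi2))
end
section
variable {lam u N : ℕ} {U ι : Type*} [Fintype U] [Fintype ι]

lemma bridge {Sw : ι → Finset U} {elem : Fin (2 ^ u) ≃ U}
    {G' H' : Finset (SCV lam u N U ι × SCV lam u N U ι)} {t : SCV lam u N U ι}
    (h1 : maxFlow G' sV t ≤ lam → maxFlow H' sV t = maxFlow G' sV t)
    (h2 : lam < maxFlow G' sV t → lam ≤ maxFlow H' sV t)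
    (hG'sub : G' ⊆ scGraph lam u N U ι Sw elem)
    (hH'sub : H' ⊆ scGraph lam u N U ι Sw elem)
    (hEDPG' : EDP G' sV t lam) :
    EDP H' sV t lam := by
  have hlow : lam ≤ maxFlow G' sV t := le_maxFlow hEDPG' (bddAbove_EDP hG'sub t)
  by_cases hc : maxFlow G' sV t ≤ lam
  · exact EDP_of_le_maxFlow hH'sub (by rw [h1 hc]; exact hlow)
  · exact EDP_of_le_maxFlow hH'sub (h2 (lt_of_not_ge hc))

lemma coverage_core {Sw : ι → Finset U} {elem : Fin (2 ^ u) ≃ U}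
    (i : Fin lam) (x : U) (j0 : Fin N)
    (E : Finset (SCV lam u N U ι × SCV lam u N U ι))
    (hEsub : ∀ e ∈ E, scEdge lam u N U ι Sw elem e ∧ e ∉ FSet (N := N) Sw elem i x)
    (hEDP : EDP E sV (sinkV j0) lam) :
    ∃ w, x ∈ Sw w ∧ (yV i w, sinkV j0) ∈ E := by
  have hEsub' : E ⊆ scGraph lam u N U ι Sw elem := fun e he => mem_scGraph.mpr (hEsub e he).1
  obtain ⟨ps, hpath, hdisj⟩ := hEDP
  choose f rest hf using fun i₀ => head_from_source hEsub' (hpath i₀)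
  have hinj : Function.Injective f := by
    intro i₀ i₁ hfe
    by_contra hne
    have h1 : ((sV : SCV lam u N U ι), tV (f i₀) ⟨0, Mpos⟩) ∈ ps i₀ := by rw [hf i₀]; simp
    have h2 : ((sV : SCV lam u N U ι), tV (f i₀) ⟨0, Mpos⟩) ∈ ps i₁ := by
      rw [hf i₁, hfe]; simp
    exact hdisj i₀ i₁ hne _ h1 h2
  obtain ⟨i₀, hi₀⟩ := Finite.surjective_of_injective hinj i
  obtain ⟨hne0, hmem0, hchain0, hhead0, hlast0⟩ := hpath i₀
  rw [hf i₀, hi₀] at hmem0 hchain0 hlast0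
  cases hrest : rest i₀ with
  | nil =>
    rw [hrest] at hlast0
    simp [tV, sinkV] at hlast0
  | cons e' rest' =>
    rw [hrest] at hmem0 hchain0 hlast0
    obtain ⟨hce, hcr⟩ := List.isChain_cons_cons.mp hchain0
    have hroot : (tV i (⟨0, Mpos⟩ : Fin (2 ^ (u + 1) - 1)) : SCV lam u N U ι) =
        tV i (nodeF u (elem.symm x) 0) := by
      congr 1
      exact Fin.ext (by
        rw [nodeF_val (Nat.zero_le u) (elem.symm x).isLt, nodeIdx_zero (elem.symm x).isLt])
    exact force (Sw := Sw) (elem := elem) i x j0 E hEsub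
      (e' :: rest') (fun e he => hmem0 e (List.mem_cons_of_mem _ he)) hcr
      (tV i ⟨0, Mpos⟩) (Or.inl ⟨0, Nat.zero_le u, hroot⟩)
      (by simp only [List.head?_cons, Option.map_some]; exact hce ▸ rfl)
      (by rw [← hlast0, List.getLast?_cons_cons])
end

end SC16

/-- from any `(lam, u+1)`-FT-BFP `H` of the set-cover reduction graph,
taking a sink `v_{j₀}` of minimum in-degree in `H` and
`S_i = {W : (y_{i,W}, v_{j₀}) ∈ E(H)}`, some `S_i` is a valid set cover of `U` of
size at most `|in(v_{j₀}, H)| / lam`. -/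
theorem stmt_16 (lam u N : ℕ) (hlam : 1 ≤ lam) (hN : 1 ≤ N)
    {U ι : Type*} [Fintype U] [DecidableEq U] [Fintype ι] [DecidableEq ι]
    (Sw : ι → Finset U) (elem : Fin (2 ^ u) ≃ U)
    (hcov : ∀ x : U, ∃ w : ι, x ∈ Sw w)
    (H : Finset (SCV lam u N U ι × SCV lam u N U ι))
    (hH : IsFTBFP (scGraph lam u N U ι Sw elem) H (Sum.inl ()) lam (u + 1))
    (j0 : Fin N)
    (hj0 : ∀ j : Fin N, (inEdges H (sinkV j0)).card ≤ (inEdges H (sinkV j)).card) :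
    ∃ i : Fin lam, ∃ Scov : Finset ι,
      (∀ w : ι, w ∈ Scov ↔ (yV i w, sinkV j0) ∈ H) ∧
      (∀ x : U, ∃ w ∈ Scov, x ∈ Sw w) ∧
      lam * Scov.card ≤ (inEdges H (sinkV j0)).card := by
  letI : DecidableEq (SCV lam u N U ι × SCV lam u N U ι) := fun a b => instDecidableEqProd a b

  have hcov2 : ∀ (i : Fin lam) (x : U), ∃ w, x ∈ Sw w ∧ (yV i w, sinkV j0) ∈ H := by
    intro i x
    obtain ⟨w0, hw0⟩ := hcov x
    obtain ⟨hft1, hft2⟩ :=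
      hH.2 (SC16.FSet (N := N) Sw elem i x) (SC16.FSet_card Sw elem i x) (sinkV j0)
    have hEDPH : EDP (H \ SC16.FSet (N := N) Sw elem i x) SC16.sV (sinkV j0) lam := by
      apply SC16.bridge hft1 hft2
      · exact Finset.sdiff_subset
      · exact Finset.sdiff_subset.trans hH.1
      · exact ⟨fun i' => SC16.pathP elem i x j0 w0 i',
          fun i' => SC16.pathP_isPath Sw hw0 _
            (fun e h1 h2 => Finset.mem_sdiff.mpr ⟨h1, h2⟩),
          fun i1 i2 hne e he => SC16.pathP_disjoint hne he⟩
    obtain ⟨w, hw, hmemw⟩ := SC16.coverage_core i x j0 _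
      (fun e he => ⟨SC16.mem_scGraph.mp (hH.1 (Finset.mem_sdiff.mp he).1),
        (Finset.mem_sdiff.mp he).2⟩) hEDPH
    exact ⟨w, hw, (Finset.mem_sdiff.mp hmemw).1⟩
  set T : Fin lam → Finset ι := fun i => Finset.univ.filter fun w => (yV i w, sinkV j0) ∈ H
    with hT
  obtain ⟨imin, _, hmin⟩ := Finset.exists_min_image Finset.univ (fun i => (T i).card)
    ⟨⟨0, hlam⟩, Finset.mem_univ _⟩
  refine ⟨imin, T imin, ?_, ?_, ?_⟩
  · intro w; simp [hT]
  · intro x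
    obtain ⟨w, hw, hmem⟩ := hcov2 imin x
    exact ⟨w, by simp [hT, hmem], hw⟩
  · have hsum : ∑ i : Fin lam, (T i).card ≤ (inEdges H (sinkV j0)).card := by
      rw [← Finset.card_sigma]
      apply Finset.card_le_card_of_injOn (fun p => (yV p.1 p.2, sinkV j0))
      · intro p hp
        rw [Finset.mem_coe, Finset.mem_sigma] at hp
        rw [Finset.mem_coe, inEdges, Finset.mem_filter]
        exact ⟨(Finset.mem_filter.mp hp.2).2, rfl⟩
      · intro p1 h1 p2 h2 he
        have hfst := congrArg Prod.fst he
        simp only [yV, Sum.inr.injEq, Sum.inl.injEq, Prod.mk.injEq] at hfst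
        exact Sigma.ext hfst.1 (heq_of_eq hfst.2)
    calc lam * (T imin).card = ∑ _i : Fin lam, (T imin).card := by
          rw [Finset.sum_const, Finset.card_univ, Fintype.card_fin, smul_eq_mul]
      _ ≤ ∑ i, (T i).card := Finset.sum_le_sum fun i _ => hmin i (Finset.mem_univ i)
      _ ≤ _ := hsum
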